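/- Every root in the root system Φ of a Coxeter system (W, S) is either positive or negative: if f = Σ λ_s e_s ∈ Φ, then either λ_s ≥ 0 for all s or λ_s ≤ 0 for all s. -/

import Mathlib

open Real

/-- The coefficient `⟨e_s, e_t⟩ = -cos(π / m_{st})` of the canonical bilinear
form (`-1` when `m_{st} = ∞`, coded by `m s t = 0`). -/
noncomputable def canCoeff {S : Type*} (m : S → S → ℕ) (s t : S) : ℝ :=
  if m s t = 0 then -1 else -Real.cos (Real.pi / (m s t : ℝ))

/-- The canonical symmetric bilinear form on `V = S → ℝ`. -/
noncomputable def canForm {S : Type*} [Fintype S] (m : S → S → ℕ)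
    (x y : S → ℝ) : ℝ :=
  ∑ s, ∑ t, x s * y t * canCoeff m s t

/-- The simple root `e_s`. -/
noncomputable def simpleRoot {S : Type*} [DecidableEq S] (s : S) : S → ℝ :=
  Pi.single s 1

/-- The reflection `r_s(x) = x - 2⟨x, e_s⟩ e_s` of the canonical representation. -/
noncomputable def canRefl {S : Type*} [Fintype S] [DecidableEq S]
    (m : S → S → ℕ) (s : S) (x : S → ℝ) : S → ℝ :=
  x - (2 * canForm m x (simpleRoot s)) • simpleRoot s

/-- Membership in the root system `Φ = W·Π`: the smallest set of vectors
containing the simple roots and stable under all the reflections `r_s`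
(since `W` is generated by the `r_s`, this is exactly the `W`-orbit of `Π`). -/
inductive IsRoot {S : Type*} [Fintype S] [DecidableEq S] (m : S → S → ℕ) :
    (S → ℝ) → Prop
  | simple (s : S) : IsRoot m (simpleRoot s)
  | refl (s : S) (f : S → ℝ) : IsRoot m f → IsRoot m (canRefl m s f)

namespace CoxAux

open Matrix

variable {S : Type} [Fintype S] [DecidableEq S] (m : S → S → ℕ)

set_option linter.unusedSectionVars false

lemma canForm_add_left (x y w : S → ℝ) :
    canForm m (x + y) w = canForm m x w + canForm m y w := by
  unfold canForm
  rw [← Finset.sum_add_distrib]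
  refine Finset.sum_congr rfl fun s _ => ?_
  rw [← Finset.sum_add_distrib]
  refine Finset.sum_congr rfl fun t _ => ?_
  simp [add_mul]

lemma canForm_smul_left (r : ℝ) (x w : S → ℝ) :
    canForm m (r • x) w = r * canForm m x w := by
  unfold canForm
  rw [Finset.mul_sum]
  refine Finset.sum_congr rfl fun s _ => ?_
  rw [Finset.mul_sum]
  refine Finset.sum_congr rfl fun t _ => ?_
  simp; ring

lemma canForm_sub_left (x y w : S → ℝ) :
    canForm m (x - y) w = canForm m x w - canForm m y w := by
  have h := canForm_add_left m (x - y) y w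
  rw [sub_add_cancel] at h
  linarith

lemma canForm_single (x : S → ℝ) (t₀ : S) :
    canForm m x (simpleRoot t₀) = ∑ s, x s * canCoeff m s t₀ := by
  unfold canForm simpleRoot
  refine Finset.sum_congr rfl fun s _ => ?_
  rw [Finset.sum_eq_single t₀]
  · simp
  · intro b _ hb; simp [Pi.single_eq_of_ne hb]
  · intro h; simp at h

lemma canForm_single_single (a b : S) :
    canForm m (simpleRoot a) (simpleRoot b) = canCoeff m a b := by
  rw [canForm_single]
  rw [Finset.sum_eq_single a]
  · simp [simpleRoot]
  · intro c _ hc; simp [simpleRoot, Pi.single_eq_of_ne hc]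
  · intro h; simp at h

lemma canCoeff_self (hdiag : ∀ s, m s s = 1) (s : S) : canCoeff m s s = 1 := by
  simp [canCoeff, hdiag s]

lemma canCoeff_symm (hsymm : ∀ s t, m s t = m t s) (a b : S) :
    canCoeff m a b = canCoeff m b a := by
  unfold canCoeff; rw [hsymm a b]

lemma canRefl_invol (hdiag : ∀ s, m s s = 1) (s : S) (x : S → ℝ) :
    canRefl m s (canRefl m s x) = x := by
  unfold canRefl
  rw [canForm_sub_left, canForm_smul_left, canForm_single_single,
    canCoeff_self m hdiag]
  ext u
  simp only [Pi.sub_apply, Pi.smul_apply, smul_eq_mul]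
  ring

lemma canRefl_add (s : S) (x y : S → ℝ) :
    canRefl m s (x + y) = canRefl m s x + canRefl m s y := by
  unfold canRefl
  rw [canForm_add_left]
  ext u
  simp only [Pi.add_apply, Pi.sub_apply, Pi.smul_apply, smul_eq_mul]
  ring

lemma canRefl_smul (s : S) (r : ℝ) (x : S → ℝ) :
    canRefl m s (r • x) = r • canRefl m s x := by
  unfold canRefl
  rw [canForm_smul_left]
  ext u
  simp only [Pi.sub_apply, Pi.smul_apply, smul_eq_mul]
  ring

noncomputable def piWord (l : List S) : (S → ℝ) → S → ℝ :=
  l.foldr (fun s g => fun x => canRefl m s (g x)) id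

@[simp] lemma piWord_nil (x : S → ℝ) : piWord m [] x = x := rfl

@[simp] lemma piWord_cons (s : S) (l : List S) (x : S → ℝ) :
    piWord m (s :: l) x = canRefl m s (piWord m l x) := rfl

lemma piWord_append (l₁ l₂ : List S) (x : S → ℝ) :
    piWord m (l₁ ++ l₂) x = piWord m l₁ (piWord m l₂ x) := by
  induction l₁ with
  | nil => rfl
  | cons s l ih => simp [ih]

lemma piWord_add (l : List S) (x y : S → ℝ) :
    piWord m l (x + y) = piWord m l x + piWord m l y := by
  induction l with
  | nil => rfl
  | cons s l ih => simp [ih, canRefl_add]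

lemma piWord_smul (l : List S) (r : ℝ) (x : S → ℝ) :
    piWord m l (r • x) = r • piWord m l x := by
  induction l with
  | nil => rfl
  | cons s l ih => simp [ih, canRefl_smul]

lemma piWord_cancel (hdiag : ∀ s, m s s = 1) (l₁ l₂ : List S) (x : S → ℝ) (a : S) :
    piWord m (l₁ ++ a :: a :: l₂) x = piWord m (l₁ ++ l₂) x := by
  rw [piWord_append, piWord_append]
  congr 1
  rw [piWord_cons, piWord_cons, canRefl_invol m hdiag]

noncomputable def canReflMat (s : S) : Matrix S S ℝ :=
  1 + Matrix.replicateCol Unit (simpleRoot s) * Matrix.replicateRow Unit (fun v => -2 * canCoeff m v s)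

lemma canReflMat_mulVec (s : S) (x : S → ℝ) :
    (canReflMat m s).mulVec x = canRefl m s x := by
  have hent : ∀ i j, (Matrix.replicateCol Unit (simpleRoot s) *
      Matrix.replicateRow Unit (fun v => -2 * canCoeff m v s)) i j
      = simpleRoot s i * (-2 * canCoeff m j s) := by
    intro i j
    rw [Matrix.mul_apply]
    simp
  ext u
  rw [canReflMat, Matrix.add_mulVec, Matrix.one_mulVec, Pi.add_apply]
  rw [canRefl, Pi.sub_apply, Pi.smul_apply, smul_eq_mul, canForm_single]
  have h1 : ((Matrix.replicateCol Unit (simpleRoot s) *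
      Matrix.replicateRow Unit (fun v => -2 * canCoeff m v s)) *ᵥ x) u
      = ∑ j, simpleRoot s u * (-2 * canCoeff m j s) * x j := by
    rw [Matrix.mulVec, dotProduct]
    exact Finset.sum_congr rfl fun j _ => by rw [hent]
  rw [h1]
  have h2 : (2 * ∑ v, x v * canCoeff m v s) * simpleRoot s u
      = ∑ j, 2 * (x j * canCoeff m j s) * simpleRoot s u := by
    rw [Finset.mul_sum, Finset.sum_mul]
  rw [h2, sub_eq_add_neg, ← Finset.sum_neg_distrib]
  congr 1
  exact Finset.sum_congr rfl fun j _ => by ring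

lemma det_canReflMat (hdiag : ∀ s, m s s = 1) (s : S) :
    (canReflMat m s).det = -1 := by
  rw [canReflMat, Matrix.det_one_add_replicateCol_mul_replicateRow]
  have : (fun v => -2 * canCoeff m v s) ⬝ᵥ simpleRoot s = -2 := by
    rw [dotProduct]
    rw [Finset.sum_eq_single s]
    · rw [canCoeff_self m hdiag]; simp [simpleRoot]
    · intro b _ hb; simp [simpleRoot, Pi.single_eq_of_ne hb]
    · intro h; simp at h
  rw [this]; norm_num

noncomputable def wordMat (l : List S) : Matrix S S ℝ :=
  (l.map (canReflMat m)).prod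

lemma wordMat_mulVec (l : List S) (x : S → ℝ) :
    (wordMat m l).mulVec x = piWord m l x := by
  induction l with
  | nil => simp [wordMat, Matrix.one_mulVec]
  | cons s l ih =>
    rw [wordMat, List.map_cons, List.prod_cons, piWord_cons, ← ih,
      ← canReflMat_mulVec, ← Matrix.mulVec_mulVec]
    rfl

lemma det_wordMat (hdiag : ∀ s, m s s = 1) (l : List S) :
    (wordMat m l).det = (-1 : ℝ) ^ l.length := by
  induction l with
  | nil => simp [wordMat]
  | cons s l ih =>
    rw [wordMat, List.map_cons, List.prod_cons, Matrix.det_mul,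
      det_canReflMat m hdiag]
    rw [wordMat] at ih
    rw [ih, List.length_cons, pow_succ]
    ring

lemma parity_of_piWord_eq (hdiag : ∀ s, m s s = 1) {l₁ l₂ : List S}
    (h : piWord m l₁ = piWord m l₂) : (Even l₁.length ↔ Even l₂.length) := by
  have hm : wordMat m l₁ = wordMat m l₂ := by
    ext i j
    have e1 : (wordMat m l₁).mulVec (simpleRoot j) i = wordMat m l₁ i j := by
      rw [simpleRoot, Matrix.mulVec_single]; simp
    have e2 : (wordMat m l₂).mulVec (simpleRoot j) i = wordMat m l₂ i j := by
      rw [simpleRoot, Matrix.mulVec_single]; simp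
    rw [← e1, ← e2, wordMat_mulVec, wordMat_mulVec, h]
  have hd : ((-1 : ℝ)) ^ l₁.length = (-1) ^ l₂.length := by
    rw [← det_wordMat m hdiag, ← det_wordMat m hdiag, hm]
  constructor
  · intro he
    by_contra ho
    rw [(Even.neg_one_pow he : ((-1:ℝ))^l₁.length = 1),
      (Odd.neg_one_pow (Nat.not_even_iff_odd.mp ho) : ((-1:ℝ))^l₂.length = -1)] at hd
    norm_num at hd
  · intro he
    by_contra ho
    rw [(Even.neg_one_pow he : ((-1:ℝ))^l₂.length = 1),
      (Odd.neg_one_pow (Nat.not_even_iff_odd.mp ho) : ((-1:ℝ))^l₁.length = -1)] at hd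
    norm_num at hd

/-! ### word length -/

noncomputable def wlen (P : S → Prop) (g : (S → ℝ) → S → ℝ) : ℕ :=
  sInf {n | ∃ l : List S, (∀ x ∈ l, P x) ∧ l.length = n ∧ piWord m l = g}

lemma wlen_le {P : S → Prop} {l : List S} (hP : ∀ x ∈ l, P x)
    {g : (S → ℝ) → S → ℝ} (hg : piWord m l = g) : wlen m P g ≤ l.length :=
  Nat.sInf_le ⟨l, hP, rfl, hg⟩

lemma exists_reduced {P : S → Prop} {g : (S → ℝ) → S → ℝ}
    {l₀ : List S} (hP : ∀ x ∈ l₀, P x) (hg : piWord m l₀ = g) :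
    ∃ l : List S, (∀ x ∈ l, P x) ∧ l.length = wlen m P g ∧ piWord m l = g := by
  have h := Nat.sInf_mem (s := {n | ∃ l : List S,
      (∀ x ∈ l, P x) ∧ l.length = n ∧ piWord m l = g}) ⟨l₀.length, l₀, hP, rfl, hg⟩
  exact h

lemma wlen_parity (hdiag : ∀ s, m s s = 1) {P : S → Prop} {g : (S → ℝ) → S → ℝ}
    {l₀ : List S} (hP : ∀ x ∈ l₀, P x) (hg : piWord m l₀ = g) :
    (Even (wlen m P g) ↔ Even l₀.length) := by
  obtain ⟨l, -, hlen, hl⟩ := exists_reduced m hP hg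
  rw [← hlen]
  exact parity_of_piWord_eq m hdiag (hl.trans hg.symm)

/-! ### Chebyshev-type sequences -/

noncomputable def cheb (γ : ℝ) : ℕ → ℝ
  | 0 => 0
  | 1 => 1
  | (k + 2) => 2 * γ * cheb γ (k + 1) - cheb γ k

lemma cheb_one : ∀ k, cheb 1 k = k := by
  have h : ∀ k, cheb 1 k = (k : ℝ) ∧ cheb 1 (k + 1) = ((k + 1 : ℕ) : ℝ) := by
    intro k
    induction k with
    | zero => constructor <;> simp [cheb]
    | succ n ih =>
      constructor
      · exact ih.2
      · show cheb 1 (n + 2) = ((n + 1 + 1 : ℕ) : ℝ)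
        rw [cheb, ih.1, ih.2]
        push_cast; ring
  exact fun k => (h k).1

lemma cheb_sin {θ : ℝ} (hs : Real.sin θ ≠ 0) :
    ∀ k, cheb (Real.cos θ) k = Real.sin (k * θ) / Real.sin θ := by
  have h : ∀ k, cheb (Real.cos θ) k = Real.sin ((k : ℝ) * θ) / Real.sin θ ∧
      cheb (Real.cos θ) (k + 1) = Real.sin (((k + 1 : ℕ) : ℝ) * θ) / Real.sin θ := by
    intro k
    induction k with
    | zero =>
      constructor
      · simp [cheb]
      · show cheb (Real.cos θ) 1 = _
        rw [cheb]
        norm_num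
        rw [div_self hs]
    | succ n ih =>
      constructor
      · exact ih.2
      · show cheb (Real.cos θ) (n + 2) = Real.sin (((n + 1 + 1 : ℕ) : ℝ) * θ) / Real.sin θ
        rw [cheb, ih.1, ih.2]
        have e1 : ((n + 1 + 1 : ℕ) : ℝ) * θ = ((n + 1 : ℕ) : ℝ) * θ + θ := by push_cast; ring
        have e2 : ((n : ℕ) : ℝ) * θ = ((n + 1 : ℕ) : ℝ) * θ - θ := by push_cast; ring
        rw [e1, e2, Real.sin_add, Real.sin_sub]
        field_simp
        ring
  exact fun k => (h k).1

/-! ### alternating words -/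

def altR (a b : S) : ℕ → List S
  | 0 => []
  | (k + 1) => a :: altR b a k

@[simp] lemma altR_zero (a b : S) : altR a b 0 = [] := rfl

@[simp] lemma altR_succ (a b : S) (k : ℕ) : altR a b (k + 1) = a :: altR b a k := rfl

lemma altR_length : ∀ (k : ℕ) (a b : S), (altR a b k).length = k := by
  intro k
  induction k with
  | zero => intro a b; rfl
  | succ n ih => intro a b; simp [ih]

lemma altR_mem : ∀ (k : ℕ) (a b : S), ∀ x ∈ altR a b k, x = a ∨ x = b := by
  intro k
  induction k with
  | zero => intro a b x hx; simp [altR] at hx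
  | succ n ih =>
    intro a b x hx
    rw [altR_succ, List.mem_cons] at hx
    rcases hx with h | h
    · exact Or.inl h
    · exact (ih b a x h).symm

lemma altR_split : ∀ (p : ℕ) (q : ℕ) (a b : S), altR a b (p + q) =
    altR a b p ++ (if Even p then altR a b q else altR b a q) := by
  intro p
  induction p with
  | zero => intro q a b; simp
  | succ n ih =>
    intro q a b
    have e : n + 1 + q = (n + q) + 1 := by ring
    rw [e, altR_succ, ih q b a, altR_succ, List.cons_append]
    by_cases h : Even n
    · rw [if_pos h, if_neg (by simp [Nat.even_add_one, h])]
    · rw [if_neg h, if_pos (by simp [Nat.even_add_one, h])]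

lemma altR_concat (p : ℕ) (a b : S) :
    altR a b (p + 1) = altR a b p ++ [if Even p then a else b] := by
  rw [altR_split p 1 a b]
  by_cases h : Even p
  · rw [if_pos h, if_pos h]; rfl
  · rw [if_neg h, if_neg h]; rfl

lemma alt_of_chain {s t : S} (hst : s ≠ t) :
    ∀ l : List S, (∀ x ∈ l, x = s ∨ x = t) → l.Chain' (· ≠ ·) →
      l = altR s t l.length ∨ l = altR t s l.length := by
  intro l
  induction l with
  | nil => intro _ _; left; rfl
  | cons x xs ih =>
    intro hmem hch
    have hxs := ih (fun y hy => hmem y (List.mem_cons_of_mem x hy))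
      (List.IsChain.tail hch)
    cases xs with
    | nil =>
      rcases hmem x (List.mem_cons_self) with h | h
      · left; rw [h]; rfl
      · right; rw [h]; rfl
    | cons y ys =>
      have hxy : x ≠ y := (List.isChain_cons_cons.mp hch).1
      rcases hxs with h | h
      · have h2 := h
        rw [List.length_cons, altR_succ] at h2
        have hy : y = s := (List.cons_eq_cons.mp h2).1
        have hx : x = t := by
          rcases hmem x (List.mem_cons_self) with h' | h'
          · exact absurd (h'.trans hy.symm) hxy
          · exact h'
        right
        show x :: y :: ys = altR t s ((y :: ys).length + 1)
        rw [altR_succ, hx, ← h]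
      · have h2 := h
        rw [List.length_cons, altR_succ] at h2
        have hy : y = t := (List.cons_eq_cons.mp h2).1
        have hx : x = s := by
          rcases hmem x (List.mem_cons_self) with h' | h'
          · exact h'
          · exact absurd (h'.trans hy.symm) hxy
        left
        show x :: y :: ys = altR s t ((y :: ys).length + 1)
        rw [altR_succ, hx, ← h]

lemma not_chain'_decomp : ∀ l : List S, ¬ l.Chain' (· ≠ ·) →
    ∃ (l₁ : List S) (x : S) (l₂ : List S), l = l₁ ++ x :: x :: l₂ := by
  intro l
  induction l with
  | nil => intro h; exact absurd List.isChain_nil h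
  | cons x xs ih =>
    intro h
    by_cases hx : xs.Chain' (· ≠ ·)
    · cases xs with
      | nil => exact absurd (List.isChain_singleton x) h
      | cons y ys =>
        have : x = y := by
          by_contra hne
          exact h (List.isChain_cons_cons.mpr ⟨hne, hx⟩)
        exact ⟨[], x, ys, by rw [this]; rfl⟩
    · obtain ⟨l₁, z, l₂, hl⟩ := ih hx
      exact ⟨x :: l₁, z, l₂, by rw [hl]; rfl⟩

/-! ### rank-2 computations -/

@[simp] lemma cheb_zero (γ : ℝ) : cheb γ 0 = 0 := rfl

@[simp] lemma cheb_one' (γ : ℝ) : cheb γ 1 = 1 := rfl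

lemma cheb_step (γ : ℝ) (k : ℕ) :
    cheb γ (k + 2) = 2 * γ * cheb γ (k + 1) - cheb γ k := by rw [cheb]

noncomputable def pairVec (a b : S) (A B : ℝ) : S → ℝ :=
  A • simpleRoot a + B • simpleRoot b

lemma pairVec_congr {a b : S} {A B A' B' : ℝ} (hA : A = A') (hB : B = B') :
    pairVec a b A B = pairVec a b A' B' := by rw [hA, hB]

lemma pairVec_swap (a b : S) (A B : ℝ) : pairVec a b A B = pairVec b a B A := by
  unfold pairVec
  ext u
  simp only [Pi.add_apply, Pi.smul_apply, smul_eq_mul]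
  ring

lemma pairVec_left (a b : S) : pairVec a b 1 0 = simpleRoot a := by
  unfold pairVec
  ext u
  simp

lemma pairVec_right (a b : S) : pairVec a b 0 1 = simpleRoot b := by
  unfold pairVec
  ext u
  simp

lemma canForm_pairVec (a b x : S) (A B : ℝ) :
    canForm m (pairVec a b A B) (simpleRoot x)
      = A * canCoeff m a x + B * canCoeff m b x := by
  unfold pairVec
  rw [canForm_add_left, canForm_smul_left, canForm_smul_left,
    canForm_single_single, canForm_single_single]

lemma canRefl_pairVec (hdiag : ∀ s, m s s = 1) (hsymm : ∀ s t, m s t = m t s)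
    {γ : ℝ} {a b : S} (hγ : canCoeff m a b = -γ) (A B : ℝ) :
    canRefl m a (pairVec a b A B) = pairVec a b (2 * γ * B - A) B := by
  unfold canRefl
  rw [canForm_pairVec, canCoeff_self m hdiag, canCoeff_symm m hsymm b a, hγ]
  ext u
  simp only [pairVec, Pi.add_apply, Pi.sub_apply, Pi.smul_apply, smul_eq_mul]
  ring

lemma alt_eval (hdiag : ∀ s, m s s = 1) (hsymm : ∀ s t, m s t = m t s) (γ : ℝ) :
    ∀ (k : ℕ) (a b : S), a ≠ b → canCoeff m a b = -γ →
    (piWord m (altR a b k) (simpleRoot a) =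
      if Even k then pairVec a b (cheb γ (k + 1)) (cheb γ k)
      else pairVec a b (-(cheb γ k)) (-(cheb γ (k - 1))))
    ∧ (piWord m (altR a b k) (simpleRoot b) =
      if k = 0 then pairVec a b 0 1 else
      if Even k then pairVec a b (-(cheb γ k)) (-(cheb γ (k - 1)))
      else pairVec a b (cheb γ (k + 1)) (cheb γ k)) := by
  intro k
  induction k with
  | zero =>
    intro a b hab hγ
    constructor
    · rw [altR_zero, piWord_nil, if_pos Even.zero, cheb_one', cheb_zero,
        pairVec_left]
    · rw [altR_zero, piWord_nil, if_pos rfl, pairVec_right]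
  | succ k ih =>
    intro a b hab hγ
    have hγ' : canCoeff m b a = -γ := by
      rw [← canCoeff_symm m hsymm]; exact hγ
    have ihab := ih b a hab.symm hγ'
    constructor
    · rw [altR_succ, piWord_cons, ihab.2]
      by_cases h0 : k = 0
      · subst h0
        rw [if_pos rfl, pairVec_swap, canRefl_pairVec m hdiag hsymm hγ,
          if_neg (by simp : ¬ Even 1)]
        exact pairVec_congr (by rw [cheb_one']; ring) (by rw [cheb_zero]; ring)
      · obtain ⟨j, rfl⟩ : ∃ j, k = j + 1 :=
          ⟨k - 1, (Nat.succ_pred_eq_of_pos (Nat.pos_of_ne_zero h0)).symm⟩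
        rw [if_neg h0]
        by_cases he : Even (j + 1)
        · rw [if_pos he, pairVec_swap, canRefl_pairVec m hdiag hsymm hγ,
            if_neg (by rw [Nat.even_add_one]; exact fun h => h he)]
          refine pairVec_congr ?_ rfl
          have hs := cheb_step γ j
          simp only [Nat.add_sub_cancel]
          linarith [hs]
        · rw [if_neg he, pairVec_swap, canRefl_pairVec m hdiag hsymm hγ,
            if_pos (Nat.even_add_one.mpr he)]
          refine pairVec_congr ?_ rfl
          have hs := cheb_step γ (j + 1)
          linarith [hs]
    · rw [altR_succ, piWord_cons, ihab.1]
      rw [if_neg (Nat.succ_ne_zero k)]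
      by_cases he : Even k
      · rw [if_pos he, pairVec_swap, canRefl_pairVec m hdiag hsymm hγ,
          if_neg (by rw [Nat.even_add_one]; exact fun h => h he)]
        refine pairVec_congr ?_ rfl
        have hs := cheb_step γ k
        linarith [hs]
      · have h0 : k ≠ 0 := by rintro rfl; exact he Even.zero
        obtain ⟨j, rfl⟩ : ∃ j, k = j + 1 :=
          ⟨k - 1, (Nat.succ_pred_eq_of_pos (Nat.pos_of_ne_zero h0)).symm⟩
        rw [if_neg he, pairVec_swap, canRefl_pairVec m hdiag hsymm hγ,
          if_pos (Nat.even_add_one.mpr he)]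
        refine pairVec_congr ?_ rfl
        have hs := cheb_step γ j
        simp only [Nat.add_sub_cancel]
        linarith [hs]

/-! ### special values of cheb at `θ = π / M` -/

lemma sin_pos_aux {M : ℕ} (hM : 2 ≤ M) : 0 < Real.sin (π / M) := by
  have hM0 : (0:ℝ) < M := by
    have : (2:ℝ) ≤ M := by exact_mod_cast hM
    linarith
  have hθpos : 0 < π / M := div_pos Real.pi_pos hM0
  have hθle : π / M ≤ π / 2 := by
    apply div_le_div_of_nonneg_left Real.pi_pos.le (by norm_num)
    exact_mod_cast hM
  have hθlt : π / M < π := lt_of_le_of_lt hθle (by linarith [Real.pi_pos])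
  exact Real.sin_pos_of_pos_of_lt_pi hθpos hθlt

lemma rank2_facts {M : ℕ} (hM : 2 ≤ M) :
    (∀ j ≤ M, 0 ≤ cheb (Real.cos (π / M)) j) ∧
    cheb (Real.cos (π / M)) M = 0 ∧
    cheb (Real.cos (π / M)) (M + 1) = -1 ∧
    cheb (Real.cos (π / M)) (M - 1) = 1 := by
  have hM0 : (0:ℝ) < M := by
    have : (2:ℝ) ≤ M := by exact_mod_cast hM
    linarith
  have hθpos : 0 < π / M := div_pos Real.pi_pos hM0
  have hsin := sin_pos_aux hM
  have hc := cheb_sin (ne_of_gt hsin)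
  refine ⟨?_, ?_, ?_, ?_⟩
  · intro j hj
    rw [hc]
    apply div_nonneg _ hsin.le
    apply Real.sin_nonneg_of_nonneg_of_le_pi
    · positivity
    · have hjM : (j:ℝ) ≤ M := by exact_mod_cast hj
      calc (j:ℝ) * (π / M) ≤ (M:ℝ) * (π / M) :=
            mul_le_mul_of_nonneg_right hjM hθpos.le
        _ = π := by field_simp
  · rw [hc]
    have e : (M:ℝ) * (π / M) = π := by field_simp
    rw [e, Real.sin_pi, zero_div]
  · rw [hc]
    have e : ((M + 1:ℕ):ℝ) * (π / M) = π + π / M := by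
      push_cast
      field_simp
    rw [e, Real.sin_add, Real.sin_pi, Real.cos_pi]
    rw [show (0:ℝ) * Real.cos (π / M) + -1 * Real.sin (π / M)
        = -(Real.sin (π / M)) by ring]
    rw [neg_div, div_self (ne_of_gt hsin)]
  · rw [hc]
    have e : ((M - 1:ℕ):ℝ) * (π / M) = π - π / M := by
      have e2 : ((M - 1:ℕ):ℝ) = (M:ℝ) - 1 := by
        have : 1 ≤ M := by omega
        push_cast [this]
        ring
      rw [e2]
      field_simp
    rw [e, Real.sin_pi_sub, div_self (ne_of_gt hsin)]

/-! ### the braid relation -/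

lemma piWord_fix_of_orth {s t : S} {z : S → ℝ}
    (hzs : canForm m z (simpleRoot s) = 0)
    (hzt : canForm m z (simpleRoot t) = 0) :
    ∀ l : List S, (∀ x ∈ l, x = s ∨ x = t) → piWord m l z = z := by
  intro l
  induction l with
  | nil => intro _; rfl
  | cons x xs ih =>
    intro hmem
    rw [piWord_cons, ih (fun y hy => hmem y (List.mem_cons_of_mem x hy))]
    rcases hmem x (List.mem_cons_self) with rfl | rfl
    · rw [canRefl, hzs]
      ext u
      simp
    · rw [canRefl, hzt]
      ext u
      simp

lemma braid (hdiag : ∀ s, m s s = 1) (hsymm : ∀ s t, m s t = m t s)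
    {s t : S} (hst : s ≠ t) (hm : m s t ≠ 0) (hM : 2 ≤ m s t) :
    piWord m (altR s t (m s t)) = piWord m (altR t s (m s t)) := by
  have hγ : canCoeff m s t = -(Real.cos (π / (m s t : ℕ))) := by
    simp only [canCoeff, if_neg hm]
  have hγ' : canCoeff m t s = -(Real.cos (π / (m s t : ℕ))) := by
    rw [← canCoeff_symm m hsymm]
    exact hγ
  set γ := Real.cos (π / (m s t : ℕ)) with hγdef
  obtain ⟨hnn, hv0, hv1, hvm1⟩ := rank2_facts hM
  have hsin := sin_pos_aux hM
  have hpos : 0 < 1 - canCoeff m s t ^ 2 := by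
    rw [hγ]
    have hpyth := Real.sin_sq_add_cos_sq (π / (m s t : ℕ))
    nlinarith [hsin]
  funext x
  set c := canCoeff m s t with hcdef
  set p := canForm m x (simpleRoot s) with hp
  set q := canForm m x (simpleRoot t) with hq
  set A := (p - c * q) / (1 - c^2) with hA
  set B := (q - c * p) / (1 - c^2) with hB
  set z := x - pairVec s t A B with hzdef
  have hx : x = pairVec s t A B + z := by
    rw [hzdef]
    ext u
    simp
  have hcts : canCoeff m t s = c := by
    rw [canCoeff_symm m hsymm t s]
  have hzs : canForm m z (simpleRoot s) = 0 := by
    rw [hzdef, canForm_sub_left, canForm_pairVec, canCoeff_self m hdiag, hcts,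
      ← hp, hA, hB]
    field_simp
    ring
  have hzt : canForm m z (simpleRoot t) = 0 := by
    rw [hzdef, canForm_sub_left, canForm_pairVec, canCoeff_self m hdiag,
      ← hcdef, ← hq, hA, hB]
    field_simp
    ring
  have hs_eq : piWord m (altR s t (m s t)) (simpleRoot s)
      = piWord m (altR t s (m s t)) (simpleRoot s) := by
    rw [(alt_eval m hdiag hsymm γ (m s t) s t hst hγ).1,
      (alt_eval m hdiag hsymm γ (m s t) t s hst.symm hγ').2,
      if_neg (by omega : ¬ m s t = 0)]
    rcases Nat.even_or_odd (m s t) with he | ho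
    · rw [if_pos he, if_pos he, hv0, hv1, hvm1, pairVec_swap t s]
      exact pairVec_congr (by ring) (by ring)
    · rw [if_neg (Nat.not_even_iff_odd.mpr ho), if_neg (Nat.not_even_iff_odd.mpr ho),
        hv0, hv1, hvm1, pairVec_swap t s]
      exact pairVec_congr (by ring) (by ring)
  have ht_eq : piWord m (altR s t (m s t)) (simpleRoot t)
      = piWord m (altR t s (m s t)) (simpleRoot t) := by
    rw [(alt_eval m hdiag hsymm γ (m s t) s t hst hγ).2,
      (alt_eval m hdiag hsymm γ (m s t) t s hst.symm hγ').1,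
      if_neg (by omega : ¬ m s t = 0)]
    rcases Nat.even_or_odd (m s t) with he | ho
    · rw [if_pos he, if_pos he, hv0, hv1, hvm1, pairVec_swap t s]
      exact pairVec_congr (by ring) (by ring)
    · rw [if_neg (Nat.not_even_iff_odd.mpr ho), if_neg (Nat.not_even_iff_odd.mpr ho),
        hv0, hv1, hvm1, pairVec_swap t s]
      exact pairVec_congr (by ring) (by ring)
  rw [hx]
  rw [piWord_add, piWord_add]
  rw [piWord_fix_of_orth m hzs hzt _ (altR_mem (m s t) s t),
    piWord_fix_of_orth m hzs hzt _ (fun y hy => (altR_mem (m s t) t s y hy).symm)]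
  congr 1
  rw [show pairVec s t A B = A • simpleRoot s + B • simpleRoot t from rfl]
  simp only [piWord_add, piWord_smul, hs_eq, ht_eq]

/-! ### length bound in the dihedral subgroup -/

lemma reduce_alt (hdiag : ∀ s, m s s = 1) (hsymm : ∀ s t, m s t = m t s)
    {a b : S} (hab : a ≠ b) (hm : m a b ≠ 0) (hM : 2 ≤ m a b)
    {k : ℕ} (hk : m a b < k) :
    ∃ l' : List S, (∀ x ∈ l', x = a ∨ x = b) ∧
      piWord m l' = piWord m (altR a b k) ∧ l'.length + 2 = k := by
  set M := m a b with hMdef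
  set r := k - M with hr
  have hkM : k = M + r := by omega
  have hr1 : 1 ≤ r := by omega
  set x₀ := if Even M then a else b with hx₀
  set rest₂ := if Even M then altR b a (r - 1) else altR a b (r - 1) with hrest₂
  have hrest : (if Even M then altR a b r else altR b a r) = x₀ :: rest₂ := by
    have e : r = (r - 1) + 1 := by omega
    by_cases he : Even M
    · rw [hrest₂, hx₀, if_pos he, if_pos he, if_pos he, e, altR_succ]
      simp
    · rw [hrest₂, hx₀, if_neg he, if_neg he, if_neg he, e, altR_succ]
      simp
  have hconcat : altR b a M = altR b a (M - 1) ++ [x₀] := by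
    have e : M = (M - 1) + 1 := by omega
    rw [hx₀]
    conv_lhs => rw [e]
    rw [altR_concat]
    have hpar : Even (M - 1) ↔ ¬ Even M := by
      rcases Nat.even_or_odd M with he | ho
      · constructor
        · intro h1 _
          have : Even ((M - 1) + 1) := by rw [← e]; exact he
          rw [Nat.even_add_one] at this
          exact this h1
        · intro h; exact absurd he h
      · have hM1 : Even (M - 1) := by
          have : Even ((M - 1) + 1) ↔ ¬ Even (M - 1) := Nat.even_add_one
          rw [← e] at this
          rcases Nat.even_or_odd (M - 1) with h1 | h1
          · exact h1
          · exact absurd (this.mpr (Nat.not_even_iff_odd.mpr h1)) (Nat.not_even_iff_odd.mpr ho)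
        constructor
        · intro _; exact Nat.not_even_iff_odd.mpr ho
        · intro _; exact hM1
    by_cases he : Even M
    · rw [if_neg (fun h => (hpar.mp h) he), if_pos he]
    · rw [if_pos (hpar.mpr he), if_neg he]
  refine ⟨altR b a (M - 1) ++ rest₂, ?_, ?_, ?_⟩
  · intro y hy
    rcases List.mem_append.mp hy with h | h
    · exact (altR_mem _ b a y h).symm
    · rw [hrest₂] at h
      by_cases he : Even M
      · rw [if_pos he] at h
        exact (altR_mem _ b a y h).symm
      · rw [if_neg he] at h
        exact altR_mem _ a b y h
  · have h1 : piWord m (altR a b k) = piWord m (altR b a M ++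
        (if Even M then altR a b r else altR b a r)) := by
      funext y
      conv_lhs => rw [hkM]
      rw [altR_split, piWord_append, piWord_append,
        braid m hdiag hsymm hab hm hM]
    have h2 : altR b a M ++ (if Even M then altR a b r else altR b a r)
        = altR b a (M - 1) ++ x₀ :: x₀ :: rest₂ := by
      rw [hconcat, hrest]
      simp
    rw [h1, h2]
    funext y
    rw [piWord_cancel m hdiag]
  · rw [List.length_append, altR_length, hrest₂]
    by_cases he : Even M
    · rw [if_pos he, altR_length]; omega
    · rw [if_neg he, altR_length]; omega

lemma shorten (hdiag : ∀ s, m s s = 1) (hsymm : ∀ s t, m s t = m t s) :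
    ∀ (n : ℕ) {s t : S}, s ≠ t → m s t ≠ 0 → 2 ≤ m s t →
    ∀ (l : List S), l.length ≤ n → (∀ x ∈ l, x = s ∨ x = t) →
      ∃ l' : List S, (∀ x ∈ l', x = s ∨ x = t) ∧ piWord m l' = piWord m l ∧
        l'.length ≤ m s t := by
  intro n
  induction n with
  | zero =>
    intro s t hst hm hM l hlen hmem
    have hnil : l = [] := List.eq_nil_of_length_eq_zero (Nat.le_zero.mp hlen)
    exact ⟨[], by simp, by rw [hnil], by simp⟩
  | succ n ih =>
    intro s t hst hm hM l hlen hmem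
    by_cases hch : l.Chain' (· ≠ ·)
    · by_cases hle : l.length ≤ m s t
      · exact ⟨l, hmem, rfl, hle⟩
      · push_neg at hle
        rcases alt_of_chain hst l hmem hch with hl | hl
        · obtain ⟨l₂, hmem₂, hpi₂, hlen₂⟩ :=
            reduce_alt m hdiag hsymm hst hm hM (k := l.length) hle
          obtain ⟨l', hmem', hpi', hlen'⟩ := ih hst hm hM l₂ (by omega) hmem₂
          refine ⟨l', hmem', ?_, hlen'⟩
          rw [hpi', hpi₂, ← hl]
        · have hmts : m t s ≠ 0 := by rw [hsymm t s]; exact hm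
          have hMts : 2 ≤ m t s := by rw [hsymm t s]; exact hM
          have hlets : m t s < l.length := by rw [hsymm t s]; exact hle
          obtain ⟨l₂, hmem₂, hpi₂, hlen₂⟩ :=
            reduce_alt m hdiag hsymm hst.symm hmts hMts (k := l.length) hlets
          obtain ⟨l', hmem', hpi', hlen'⟩ := ih hst hm hM l₂ (by omega)
            (fun y hy => (hmem₂ y hy).symm)
          refine ⟨l', hmem', ?_, hlen'⟩
          rw [hpi', hpi₂, ← hl]
    · obtain ⟨l₁, x, l₂, rfl⟩ := not_chain'_decomp _ hch
      have hlen' : (l₁ ++ l₂).length ≤ n := by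
        simp only [List.length_append, List.length_cons] at hlen ⊢
        omega
      have hmem' : ∀ y ∈ l₁ ++ l₂, y = s ∨ y = t := by
        intro y hy
        apply hmem
        rcases List.mem_append.mp hy with h | h
        · exact List.mem_append.mpr (Or.inl h)
        · exact List.mem_append.mpr (Or.inr (by simp [h]))
      obtain ⟨l', hm', hpi', hl'⟩ := ih hst hm hM (l₁ ++ l₂) hlen' hmem'
      refine ⟨l', hm', ?_, hl'⟩
      rw [hpi']
      funext y
      rw [piWord_cancel m hdiag]

/-! ### the main induction -/

lemma wlen_succ_ne (hdiag : ∀ s, m s s = 1) {P : S → Prop} {l : List S} {s : S}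
    (hP : ∀ x ∈ l ++ [s], P x) :
    wlen m P (piWord m (l ++ [s])) ≠ l.length := by
  intro h
  have h1 := wlen_parity m hdiag hP (rfl : piWord m (l ++ [s]) = _)
  rw [h] at h1
  simp only [List.length_append, List.length_singleton] at h1
  rw [Nat.even_add_one] at h1
  tauto

theorem key (hdiag : ∀ s, m s s = 1) (hsymm : ∀ s t, m s t = m t s)
    (hoff : ∀ s t, s ≠ t → m s t ≠ 1) :
    ∀ n : ℕ, ∀ (l : List S) (s : S),
    wlen m (fun _ => True) (piWord m l) = n →
    n < wlen m (fun _ => True) (piWord m (l ++ [s])) →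
    ∀ u, 0 ≤ piWord m l (simpleRoot s) u := by
  intro n
  induction n using Nat.strong_induction_on with
  | _ n IH =>
  intro l s hn hlt u
  obtain ⟨l₀, -, hl₀len, hl₀⟩ :=
    exists_reduced m (fun x _ => trivial) (rfl : piWord m l = piWord m l)
  rw [hn] at hl₀len
  rcases Nat.eq_zero_or_pos n with rfl | hnpos
  · have hnil : l₀ = [] := List.eq_nil_of_length_eq_zero hl₀len
    rw [hnil] at hl₀
    rw [← hl₀, piWord_nil]
    by_cases h : u = s <;> simp [simpleRoot, Pi.single_apply, h]
  obtain ⟨n', rfl⟩ : ∃ n', n = n' + 1 :=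
    ⟨n - 1, (Nat.succ_pred_eq_of_pos hnpos).symm⟩
  rcases l₀.eq_nil_or_concat' with rfl | ⟨l₀', t, rfl⟩
  · simp at hl₀len
  have hl₀'len : l₀'.length = n' := by
    rw [List.length_append, List.length_singleton] at hl₀len
    omega
  -- multiplying by t decreases length
  have hwt : piWord m (l ++ [t]) = piWord m l₀' := by
    funext x
    rw [piWord_append, ← hl₀, ← piWord_append]
    have e : (l₀' ++ [t]) ++ [t] = l₀' ++ t :: t :: [] := by simp
    rw [e, piWord_cancel m hdiag, List.append_nil]
  have hwtlen : wlen m (fun _ => True) (piWord m (l ++ [t])) ≤ n' := by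
    rw [hwt]
    exact le_trans (wlen_le m (fun _ _ => trivial) rfl) (le_of_eq hl₀'len)
  have hts : t ≠ s := by
    rintro rfl
    omega
  have hst : s ≠ t := hts.symm
  -- the minimal coset decomposition
  set Kp : Set ℕ := {kk | ∃ l₁ l₂ : List S, (∀ x ∈ l₂, x = s ∨ x = t) ∧
    piWord m (l₁ ++ l₂) = piWord m l ∧ l₁.length + l₂.length = n' + 1 ∧
    l₁.length = kk} with hKp
  have hKne : Kp.Nonempty := by
    refine ⟨n', l₀', [t], ?_, hl₀, ?_, hl₀'len⟩
    · intro x hx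
      rw [List.mem_singleton] at hx
      exact Or.inr hx
    · rw [List.length_singleton]
      omega
  obtain ⟨l₁, l₂, hImem, hfac, hsum, hkmin⟩ := Nat.sInf_mem hKne
  -- l₁ is reduced
  have hl₁red : wlen m (fun _ => True) (piWord m l₁) = l₁.length := by
    apply le_antisymm (wlen_le m (fun _ _ => trivial) rfl)
    by_contra h
    push_neg at h
    obtain ⟨l₁', -, hlen', hpi'⟩ :=
      exists_reduced m (fun x _ => trivial) (rfl : piWord m l₁ = piWord m l₁)
    have hw : piWord m (l₁' ++ l₂) = piWord m l := by
      funext x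
      rw [piWord_append, hpi', ← piWord_append, hfac]
    have hle := wlen_le m (fun x _ => trivial) hw
    rw [hn, List.length_append] at hle
    omega
  -- l₂ is I-reduced
  have hl₂red : wlen m (fun x => x = s ∨ x = t) (piWord m l₂) = l₂.length := by
    apply le_antisymm (wlen_le m hImem rfl)
    by_contra h
    push_neg at h
    obtain ⟨l₂', -, hlen', hpi'⟩ := exists_reduced m hImem
      (rfl : piWord m l₂ = piWord m l₂)
    have hw : piWord m (l₁ ++ l₂') = piWord m l := by
      funext x
      rw [piWord_append, hpi', ← piWord_append, hfac]
    have hle := wlen_le m (fun x _ => trivial) hw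
    rw [hn, List.length_append] at hle
    omega
  -- claim 1 : ℓ(v s) > ℓ(v)
  have hC1 : l₁.length < wlen m (fun _ => True) (piWord m (l₁ ++ [s])) := by
    by_contra h
    push_neg at h
    have hne := wlen_succ_ne m hdiag (P := fun _ => True)
      (fun x _ => trivial) (l := l₁) (s := s)
    have hlt' : wlen m (fun _ => True) (piWord m (l₁ ++ [s])) < l₁.length := by
      omega
    obtain ⟨l₁', -, hlen', hpi'⟩ := exists_reduced m (fun x _ => trivial)
      (rfl : piWord m (l₁ ++ [s]) = piWord m (l₁ ++ [s]))
    have hw : piWord m (l₁' ++ (s :: l₂)) = piWord m l := by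
      funext x
      rw [piWord_append, hpi', piWord_append, piWord_cons]
      rw [piWord_nil, piWord_cons, canRefl_invol m hdiag, ← piWord_append, hfac]
    have hge := wlen_le m (fun x _ => trivial) hw
    rw [hn] at hge
    rw [List.length_append, List.length_cons] at hge
    have hKmem : (l₁').length ∈ Kp := by
      refine ⟨l₁', s :: l₂, ?_, hw, ?_, rfl⟩
      · intro x hx
        rcases List.mem_cons.mp hx with rfl | hx'
        · exact Or.inl rfl
        · exact hImem x hx'
      · rw [List.length_cons]
        omega
    have := Nat.sInf_le hKmem
    omega
  -- claim 2 : ℓ(v t) > ℓ(v)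
  have hC2 : l₁.length < wlen m (fun _ => True) (piWord m (l₁ ++ [t])) := by
    by_contra h
    push_neg at h
    have hne := wlen_succ_ne m hdiag (P := fun _ => True)
      (fun x _ => trivial) (l := l₁) (s := t)
    have hlt' : wlen m (fun _ => True) (piWord m (l₁ ++ [t])) < l₁.length := by
      omega
    obtain ⟨l₁', -, hlen', hpi'⟩ := exists_reduced m (fun x _ => trivial)
      (rfl : piWord m (l₁ ++ [t]) = piWord m (l₁ ++ [t]))
    have hw : piWord m (l₁' ++ (t :: l₂)) = piWord m l := by
      funext x
      rw [piWord_append, hpi', piWord_append, piWord_cons]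
      rw [piWord_nil, piWord_cons, canRefl_invol m hdiag, ← piWord_append, hfac]
    have hge := wlen_le m (fun x _ => trivial) hw
    rw [hn] at hge
    rw [List.length_append, List.length_cons] at hge
    have hKmem : (l₁').length ∈ Kp := by
      refine ⟨l₁', t :: l₂, ?_, hw, ?_, rfl⟩
      · intro x hx
        rcases List.mem_cons.mp hx with rfl | hx'
        · exact Or.inr rfl
        · exact hImem x hx'
      · rw [List.length_cons]
        omega
    have := Nat.sInf_le hKmem
    omega
  -- l₂ is nonempty
  have hl₂ne : l₂ ≠ [] := by
    rintro rfl
    rw [List.append_nil] at hfac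
    have h1 : piWord m (l₁ ++ [t]) = piWord m (l ++ [t]) := by
      funext x
      rw [piWord_append, piWord_append, hfac]
    rw [h1] at hC2
    simp only [List.length_nil] at hsum
    omega
  have hk1 : 1 ≤ l₂.length := by
    rcases l₂ with _ | ⟨y, ys⟩
    · exact absurd rfl hl₂ne
    · simp
  -- claim 4 : ℓ_I(u s) > ℓ_I(u)
  have hC4 : l₂.length < wlen m (fun x => x = s ∨ x = t)
      (piWord m (l₂ ++ [s])) := by
    by_contra h
    push_neg at h
    have hImem' : ∀ x ∈ l₂ ++ [s], x = s ∨ x = t := by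
      intro x hx
      rcases List.mem_append.mp hx with hx' | hx'
      · exact hImem x hx'
      · rw [List.mem_singleton] at hx'
        exact Or.inl hx'
    have hne := wlen_succ_ne m hdiag hImem'
    have hlt' : wlen m (fun x => x = s ∨ x = t)
        (piWord m (l₂ ++ [s])) < l₂.length := by omega
    obtain ⟨l₂', hImem₂, hlen', hpi'⟩ := exists_reduced m hImem'
      (rfl : piWord m (l₂ ++ [s]) = piWord m (l₂ ++ [s]))
    have hw : piWord m (l₁ ++ l₂') = piWord m (l ++ [s]) := by
      funext x
      rw [piWord_append, hpi', piWord_append, piWord_append, ← piWord_append,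
        hfac]
    have hge := wlen_le m (fun x _ => trivial) hw
    rw [List.length_append] at hge
    omega
  have hC5 : wlen m (fun x => x = s ∨ x = t) (piWord m (l₂ ++ [s]))
      ≤ l₂.length + 1 := by
    have hImem' : ∀ x ∈ l₂ ++ [s], x = s ∨ x = t := by
      intro x hx
      rcases List.mem_append.mp hx with hx' | hx'
      · exact hImem x hx'
      · rw [List.mem_singleton] at hx'
        exact Or.inl hx'
    have := wlen_le m hImem' (rfl : piWord m (l₂ ++ [s]) = _)
    rw [List.length_append, List.length_singleton] at this
    exact this
  -- induction hypothesis applies to l₁ with both s and t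
  have hvs : ∀ w, 0 ≤ piWord m l₁ (simpleRoot s) w := by
    intro w
    exact IH l₁.length (by omega) l₁ s hl₁red hC1 w
  have hvt : ∀ w, 0 ≤ piWord m l₁ (simpleRoot t) w := by
    intro w
    exact IH l₁.length (by omega) l₁ t hl₁red hC2 w
  -- l₂ has no adjacent duplicates
  have hch₂ : l₂.Chain' (· ≠ ·) := by
    by_contra h
    obtain ⟨la, y, lb, hdec⟩ := not_chain'_decomp _ h
    have hw : piWord m (la ++ lb) = piWord m l₂ := by
      funext x
      rw [hdec, piWord_cancel m hdiag]
    have hmemab : ∀ x ∈ la ++ lb, x = s ∨ x = t := by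
      intro x hx
      apply hImem
      rw [hdec]
      rcases List.mem_append.mp hx with h' | h'
      · exact List.mem_append.mpr (Or.inl h')
      · exact List.mem_append.mpr (Or.inr (by simp [h']))
    have hle := wlen_le m hmemab hw
    rw [hl₂red, hdec] at hle
    simp only [List.length_append, List.length_cons] at hle
    omega
  -- γ and its nonnegativity facts
  set γ : ℝ := -(canCoeff m s t) with hγdef
  have hγ : canCoeff m s t = -γ := by rw [hγdef, neg_neg]
  have hγ' : canCoeff m t s = -γ := by rw [canCoeff_symm m hsymm t s]; exact hγ
  set k := l₂.length with hkdef
  -- bound k + 1 ≤ m s t in the finite case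
  have hbound : m s t ≠ 0 → k + 1 ≤ m s t := by
    intro hm
    have hM : 2 ≤ m s t := by
      have := hoff s t hst
      omega
    have hImem' : ∀ x ∈ l₂ ++ [s], x = s ∨ x = t := by
      intro x hx
      rcases List.mem_append.mp hx with hx' | hx'
      · exact hImem x hx'
      · rw [List.mem_singleton] at hx'
        exact Or.inl hx'
    obtain ⟨l'', hmem'', hpi'', hlen''⟩ := shorten m hdiag hsymm
      (l₂ ++ [s]).length hst hm hM (l₂ ++ [s]) le_rfl hImem'
    have hle := wlen_le m hmem'' hpi''
    omega
  have hnn : 0 ≤ cheb γ k ∧ 0 ≤ cheb γ (k + 1) := by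
    by_cases hm : m s t = 0
    · have : γ = 1 := by
        rw [hγdef, canCoeff, if_pos hm]
        norm_num
      rw [this, cheb_one, cheb_one]
      constructor <;> positivity
    · have hM : 2 ≤ m s t := by
        have := hoff s t hst
        omega
      have hγcos : γ = Real.cos (π / (m s t : ℕ)) := by
        rw [hγdef, canCoeff, if_neg hm, neg_neg]
      obtain ⟨hnn', -, -, -⟩ := rank2_facts hM
      rw [hγcos]
      exact ⟨hnn' k (by have := hbound hm; omega), hnn' (k + 1) (hbound hm)⟩
  -- the last letter of l₂ is not s
  have hlastne : ∀ (a b : S), (a = s ∨ a = t) → (b = s ∨ b = t) →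
      l₂ = altR a b k → (if Even (k - 1) then a else b) ≠ s := by
    intro a b ha hb hl₂ hlast
    have e : k = (k - 1) + 1 := by omega
    have hconc : l₂ = altR a b (k - 1) ++ [if Even (k - 1) then a else b] := by
      rw [hl₂]
      conv_lhs => rw [e]
      rw [altR_concat]
    have hw : piWord m (altR a b (k - 1)) = piWord m (l₂ ++ [s]) := by
      funext x
      rw [hconc, hlast]
      have e2 : (altR a b (k - 1) ++ [s]) ++ [s]
          = altR a b (k - 1) ++ s :: s :: [] := by simp
      rw [e2, piWord_cancel m hdiag, List.append_nil]
    have hmemc : ∀ x ∈ altR a b (k - 1), x = s ∨ x = t := by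
      intro x hx
      rcases altR_mem (k - 1) a b x hx with rfl | rfl
      · exact ha
      · exact hb
    have hle := wlen_le m hmemc hw
    rw [altR_length] at hle
    omega
  -- final computation
  rcases alt_of_chain hst l₂ hImem hch₂ with hl₂eq | hl₂eq
  · -- l₂ = altR s t k
    have hlast := hlastne s t (Or.inl rfl) (Or.inr rfl) hl₂eq
    have hkeven : Even k := by
      by_cases hek : Even (k - 1)
      · rw [if_pos hek] at hlast
        exact absurd rfl hlast
      · have e : k = (k - 1) + 1 := by omega
        rw [e]
        exact Nat.even_add_one.mpr hek
    have hform := (alt_eval m hdiag hsymm γ k s t hst hγ).1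
    rw [if_pos hkeven] at hform
    rw [← hfac, piWord_append, hl₂eq, hform,
      show pairVec s t (cheb γ (k + 1)) (cheb γ k)
        = cheb γ (k + 1) • simpleRoot s + cheb γ k • simpleRoot t from rfl,
      piWord_add, piWord_smul, piWord_smul]
    simp only [Pi.add_apply, Pi.smul_apply, smul_eq_mul]
    exact add_nonneg (mul_nonneg hnn.2 (hvs u)) (mul_nonneg hnn.1 (hvt u))
  · -- l₂ = altR t s k
    have hlast := hlastne t s (Or.inr rfl) (Or.inl rfl) hl₂eq
    have hkodd : ¬ Even k := by
      by_cases hek : Even (k - 1)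
      · have e : k = (k - 1) + 1 := by omega
        rw [e, Nat.even_add_one]
        intro h
        exact h hek
      · rw [if_neg hek] at hlast
        exact absurd rfl hlast
    have hform := (alt_eval m hdiag hsymm γ k t s hst.symm hγ').2
    rw [if_neg (by omega : ¬ k = 0), if_neg hkodd] at hform
    rw [← hfac, piWord_append, hl₂eq, hform,
      show pairVec t s (cheb γ (k + 1)) (cheb γ k)
        = cheb γ (k + 1) • simpleRoot t + cheb γ k • simpleRoot s from rfl,
      piWord_add, piWord_smul, piWord_smul]
    simp only [Pi.add_apply, Pi.smul_apply, smul_eq_mul]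
    exact add_nonneg (mul_nonneg hnn.2 (hvt u)) (mul_nonneg hnn.1 (hvs u))

lemma exists_word {m : S → S → ℕ} {f : S → ℝ} (hf : IsRoot m f) :
    ∃ (l : List S) (s : S), f = piWord m l (simpleRoot s) := by
  induction hf with
  | simple s => exact ⟨[], s, rfl⟩
  | refl s f hf ih =>
    obtain ⟨l, s₀, rfl⟩ := ih
    exact ⟨s :: l, s₀, rfl⟩

end CoxAux

/-- Every root of a Coxeter system is positive or negative: if
`f = Σ λ_s e_s ∈ Φ`, then either all `λ_s ≥ 0` or all `λ_s ≤ 0`. -/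
theorem root_positive_or_negative {S : Type} [Fintype S] [DecidableEq S]
    (m : S → S → ℕ) (hdiag : ∀ s, m s s = 1) (hsymm : ∀ s t, m s t = m t s)
    (hoff : ∀ s t, s ≠ t → m s t ≠ 1)
    (f : S → ℝ) (hf : IsRoot m f) :
    (∀ s, 0 ≤ f s) ∨ (∀ s, f s ≤ 0) := by
  obtain ⟨l, s₀, rfl⟩ := CoxAux.exists_word hf
  have hpar1 := CoxAux.wlen_parity m hdiag (P := fun _ => True)
    (fun x _ => trivial) (rfl : CoxAux.piWord m l = _)
  have hpar2 := CoxAux.wlen_parity m hdiag (P := fun _ => True)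
    (fun x _ => trivial) (rfl : CoxAux.piWord m (l ++ [s₀]) = _)
  have hne : CoxAux.wlen m (fun _ => True) (CoxAux.piWord m l)
      ≠ CoxAux.wlen m (fun _ => True) (CoxAux.piWord m (l ++ [s₀])) := by
    intro h
    rw [← h] at hpar2
    rw [List.length_append, List.length_singleton, Nat.even_add_one] at hpar2
    tauto
  rcases lt_or_gt_of_ne hne with hlt | hgt
  · left
    intro w
    exact CoxAux.key m hdiag hsymm hoff _ l s₀ rfl hlt w
  · right
    intro w
    have h1 : CoxAux.piWord m ((l ++ [s₀]) ++ [s₀]) = CoxAux.piWord m l := by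
      funext x
      have e : (l ++ [s₀]) ++ [s₀] = l ++ s₀ :: s₀ :: [] := by simp
      rw [e, CoxAux.piWord_cancel m hdiag, List.append_nil]
    have h2 := CoxAux.key m hdiag hsymm hoff _ (l ++ [s₀]) s₀ rfl
      (by rw [h1]; exact hgt) w
    have hrefl : CoxAux.piWord m [s₀] (simpleRoot s₀)
        = (-1 : ℝ) • simpleRoot s₀ := by
      rw [CoxAux.piWord_cons, CoxAux.piWord_nil, canRefl,
        CoxAux.canForm_single_single, CoxAux.canCoeff_self m hdiag]
      ext v
      simp only [Pi.sub_apply, Pi.smul_apply, smul_eq_mul]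
      ring
    have h3 : CoxAux.piWord m (l ++ [s₀]) (simpleRoot s₀)
        = -(CoxAux.piWord m l (simpleRoot s₀)) := by
      rw [CoxAux.piWord_append, hrefl, CoxAux.piWord_smul]
      ext v
      simp
    rw [h3] at h2
    rw [Pi.neg_apply] at h2
    linarith
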